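/- Let λ > 0 and τ be real. Then the Möbius transformation determined by T(λ,τ) sends the point i·tanh(λ/2) to the point i·coth(λ/2)·(sech τ + i·tanh τ), and the hyperbolic distance in the upper half-plane between i·coth(λ/2) and this image point equals |τ|. -/

import Mathlib

open Matrix

/-- `T(λ,τ) = [[cosh(τ/2)·coth(λ/2), −sinh(τ/2)], [−sinh(τ/2), cosh(τ/2)·tanh(λ/2)]]` -/
noncomputable def Tmat (l τ : ℂ) : Matrix (Fin 2) (Fin 2) ℂ :=
  !![Complex.cosh (τ/2) * (Complex.cosh (l/2) / Complex.sinh (l/2)), -Complex.sinh (τ/2);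
     -Complex.sinh (τ/2), Complex.cosh (τ/2) * (Complex.sinh (l/2) / Complex.cosh (l/2))]

/-- The Möbius transformation `T(λ,τ)` sends `i·tanh(λ/2)` to
`i·coth(λ/2)·(sech τ + i·tanh τ)`, and the hyperbolic distance in the upper half-plane
(characterised by `cosh(dist(z,w)) = 1 + |z − w|²/(2·Im z·Im w)`) between `i·coth(λ/2)`
and this image point equals `|τ|`. -/
theorem twist_parameter_is_distance (l τ : ℝ) (hl : 0 < l) :
    (Tmat l τ 0 0 * (Complex.I * Real.tanh (l/2)) + Tmat l τ 0 1) /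
      (Tmat l τ 1 0 * (Complex.I * Real.tanh (l/2)) + Tmat l τ 1 1) =
      Complex.I * (Real.cosh (l/2) / Real.sinh (l/2)) *
        ((1 : ℂ) / Real.cosh τ + Complex.I * Real.tanh τ) ∧
    Real.cosh |τ| =
      1 + ‖(Complex.I * (Real.cosh (l/2) / Real.sinh (l/2))) -
            Complex.I * (Real.cosh (l/2) / Real.sinh (l/2)) *
              ((1 : ℂ) / Real.cosh τ + Complex.I * Real.tanh τ)‖ ^ 2 /
        (2 * (Complex.I * ((Real.cosh (l/2) : ℂ) / Real.sinh (l/2))).im *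
          (Complex.I * (Real.cosh (l/2) / Real.sinh (l/2)) *
            ((1 : ℂ) / Real.cosh τ + Complex.I * Real.tanh τ)).im) := by
  have hs : 0 < Real.sinh (l/2) := Real.sinh_pos_iff.2 (by linarith)
  have hc : 0 < Real.cosh (l/2) := Real.cosh_pos _
  have hC : 0 < Real.cosh τ := Real.cosh_pos _
  have hch : 0 < Real.cosh (τ/2) := Real.cosh_pos _
  have hsq : Real.cosh (τ/2)^2 - Real.sinh (τ/2)^2 = 1 := Real.cosh_sq_sub_sinh_sq _
  have hcd : Real.cosh τ = Real.cosh (τ/2)^2 + Real.sinh (τ/2)^2 := by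
    have := Real.cosh_two_mul (τ/2); rw [show 2*(τ/2) = τ by ring] at this; exact this
  have hsd : Real.sinh τ = 2 * Real.sinh (τ/2) * Real.cosh (τ/2) := by
    have := Real.sinh_two_mul (τ/2); rw [show 2*(τ/2) = τ by ring] at this; exact this
  have h1 : (Real.sinh (l/2) : ℂ) ≠ 0 := by exact_mod_cast hs.ne'
  have h2 : (Real.cosh (l/2) : ℂ) ≠ 0 := by exact_mod_cast hc.ne'
  have h3 : (Real.cosh (τ/2) : ℂ) ≠ 0 := by exact_mod_cast hch.ne'
  have h4 : (Real.cosh τ : ℂ) ≠ 0 := by exact_mod_cast hC.ne'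
  constructor
  · simp only [Tmat, Matrix.cons_val', Matrix.cons_val_zero, Matrix.cons_val_one,
      Matrix.head_cons, Matrix.head_fin_const, Matrix.cons_val_fin_one, Matrix.empty_val',
      Matrix.of_apply]
    rw [show ((τ:ℂ)/2) = ((τ/2 : ℝ) : ℂ) by push_cast; ring,
        show ((l:ℂ)/2) = ((l/2 : ℝ) : ℂ) by push_cast; ring,
        ← Complex.ofReal_cosh, ← Complex.ofReal_sinh, ← Complex.ofReal_cosh, ← Complex.ofReal_sinh]
    rw [Real.tanh_eq_sinh_div_cosh, Real.tanh_eq_sinh_div_cosh]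
    push_cast
    have e1 : Complex.sinh ((l:ℂ)/2) = ((Real.sinh (l/2) : ℝ) : ℂ) := by
      rw [Complex.ofReal_sinh]; norm_num
    have e2 : Complex.cosh ((l:ℂ)/2) = ((Real.cosh (l/2) : ℝ) : ℂ) := by
      rw [Complex.ofReal_cosh]; norm_num
    have e3 : Complex.cosh ((τ:ℂ)/2) = ((Real.cosh (τ/2) : ℝ) : ℂ) := by
      rw [Complex.ofReal_cosh]; norm_num
    have e4 : Complex.sinh ((τ:ℂ)/2) = ((Real.sinh (τ/2) : ℝ) : ℂ) := by
      rw [Complex.ofReal_sinh]; norm_num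
    have e5 : Complex.cosh (τ:ℂ) = ((Real.cosh τ : ℝ) : ℂ) := (Complex.ofReal_cosh τ).symm
    have e6 : Complex.sinh (τ:ℂ) = ((Real.sinh τ : ℝ) : ℂ) := (Complex.ofReal_sinh τ).symm
    rw [e1, e2, e3, e4, e5, e6]
    set a := (Real.cosh (τ/2) : ℂ) with ha
    set b := (Real.sinh (τ/2) : ℂ) with hb
    set c := (Real.cosh (l/2) : ℂ) with hc2
    set s := (Real.sinh (l/2) : ℂ) with hs2
    have hsqC : a^2 - b^2 = 1 := by rw [ha, hb]; exact_mod_cast hsq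
    have hcdC : ((Real.cosh τ : ℝ) : ℂ) = a^2 + b^2 := by rw [ha, hb]; exact_mod_cast hcd
    have hsdC : ((Real.sinh τ : ℝ) : ℂ) = 2*b*a := by
      rw [ha, hb]; exact_mod_cast (by linarith [hsd] : Real.sinh τ = 2 * Real.sinh (τ/2) * Real.cosh (τ/2))
    rw [hcdC, hsdC]
    have hCC : a^2 + b^2 ≠ 0 := by rw [← hcdC]; exact h4
    have hden : -b * (Complex.I * (s / c)) + a * (s / c) ≠ 0 := by
      have h : -b * (Complex.I * (s / c)) + a * (s / c) = (s/c) * (a - Complex.I * b) := by ring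
      rw [h]
      apply mul_ne_zero (div_ne_zero h1 h2)
      intro h0
      have hre := congrArg Complex.re h0
      simp only [Complex.sub_re, Complex.mul_re, Complex.I_re, Complex.I_im, ha, hb,
        Complex.ofReal_re, Complex.ofReal_im, Complex.zero_re] at hre
      nlinarith [hre, hch]
    rw [div_eq_iff hden]
    field_simp
    linear_combination ((Complex.I * a + b)) * hsqC +
      (2*a*b^2*Complex.I - 2*a^2*b + b) * Complex.I_sq
  · rw [Real.cosh_abs, Complex.sq_norm]
    rw [show ((Real.cosh (l/2):ℂ)/(Real.sinh (l/2):ℂ)) = ((Real.cosh (l/2)/Real.sinh (l/2) : ℝ):ℂ) by push_cast; ring,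
        show ((1:ℂ)/(Real.cosh τ :ℂ)) = ((1/Real.cosh τ : ℝ):ℂ) by push_cast; ring]
    simp only [Complex.normSq_apply, Complex.sub_re, Complex.sub_im, Complex.mul_re,
      Complex.mul_im, Complex.add_re, Complex.add_im, Complex.I_re, Complex.I_im,
      Complex.ofReal_re, Complex.ofReal_im]
    rw [Real.tanh_eq_sinh_div_cosh]
    have hq := Real.cosh_sq_sub_sinh_sq τ
    field_simp
    linear_combination (Real.cosh (l/2)^2 * (Real.cosh (l/2))⁻¹) * hq +
      (2 * Real.cosh τ * (1 - Real.cosh τ) * Real.cosh (l/2)) * mul_inv_cancel₀ hc.ne'
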